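/- arXiv:1812.02480 — 2 statements merged into one kernel-verified Lean document; each statement's English description precedes it below -/
import Mathlib

section
/- Let γ, ζ : [0,1] → T be loops at 1⁻ that are homotopic relative to endpoints, let n ∈ ℕ, and let δ_γ, δ_ζ : [0,∞) → T be continuous maps with δ_γ(0) = δ_ζ(0) = 1⁻, f^n ∘ δ_γ = γ* and f^n ∘ δ_ζ = ζ*. Then for every k ∈ ℕ, δ_γ(k) = δ_ζ(k), and the paths δ_γ|_{[0,k]} and δ_ζ|_{[0,k]} are homotopic relative to endpoints. -/
open scoped Real NNReal

/-- The exponential covering map `e : ℝ → S¹`, `e t = exp (2 π i t)`. -/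
noncomputable def eMap (t : ℝ) : Circle := Circle.exp (2 * Real.pi * t)

/-- The `r`-torus `T = (S¹)^r`. -/
abbrev Torus (r : ℕ) := Fin r → Circle

/-- The point `1⁻ = (1,…,1)` of the torus. -/
noncomputable def onePt (r : ℕ) : Torus r := fun _ => 1

/-- The map `f(z₁,…,z_r) = (z₁^{m₁},…,z_r^{m_r})` on the torus. -/
noncomputable def fPow {r : ℕ} (m : Fin r → ℕ) (z : Torus r) : Torus r := fun i => z i ^ m i

/-- `γ* : [0,∞) → T`, defined by `γ*(t) = γ(t-k+1)` for `t ∈ [k-1,k]`. -/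
noncomputable def loopExt {r : ℕ} (γ : Path (onePt r) (onePt r)) (t : ℝ≥0) : Torus r :=
  γ ⟨Int.fract (t : ℝ), (Int.fract_nonneg _), (Int.fract_lt_one _).le⟩

/-- The standard loop `λ_s(t) = e(st)` in the circle. -/
noncomputable def lam (s : ℤ) : Path (1 : Circle) 1 where
  toFun t := eMap (s * t)
  continuous_toFun := by
    exact Circle.exp.continuous.comp (by fun_prop)
  source' := by simp [eMap]
  target' := by
    simp only [eMap, Set.Icc.coe_one, mul_one]
    rw [show (2 * Real.pi * (s:ℝ)) = (s:ℝ) * (2 * Real.pi) by ring]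
    exact Circle.exp_int_mul_two_pi s

/-- The `m`-adic solenoid, as the inverse limit of circles under `z ↦ z^m`. -/
def Solenoid (m : ℕ) : Type := {x : ℕ → Circle // ∀ n, (x (n + 1)) ^ m = x n}

noncomputable instance (m : ℕ) : TopologicalSpace (Solenoid m) :=
  instTopologicalSpaceSubtype

/-- The product `Σ = Σ_{m₁} × ⋯ × Σ_{m_r}` identified with the inverse limit of `(T, f)`. -/
def SigmaProd {r : ℕ} (m : Fin r → ℕ) : Type :=
  {x : ℕ → Torus r // ∀ n, fPow m (x (n + 1)) = x n}

noncomputable instance {r : ℕ} (m : Fin r → ℕ) : TopologicalSpace (SigmaProd m) :=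
  instTopologicalSpaceSubtype

/-- The `n`-th coordinate projection `π_n : Σ → T`. -/
def piProj {r : ℕ} (m : Fin r → ℕ) (n : ℕ) (x : SigmaProd m) : Torus r := x.1 n

/-- The projection `η_i : Σ → Σ_{m_i}`. -/
def eta {r : ℕ} (m : Fin r → ℕ) (i : Fin r) (x : SigmaProd m) : Solenoid (m i) :=
  ⟨fun n => x.1 n i, fun n => congrFun (x.2 n) i⟩

/-- The point `p₀ = (1⁻, 1⁻, …) ∈ Σ`. -/
noncomputable def basePt {r : ℕ} (m : Fin r → ℕ) : SigmaProd m :=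
  ⟨fun _ => onePt r, fun _ => funext fun _ => one_pow _⟩


/-! ### Auxiliary lemmas -/

lemma circle_exp_sum' {ι : Type*} (s : Finset ι) (f : ι → ℝ) :
    Circle.exp (∑ i ∈ s, f i) = ∏ i ∈ s, Circle.exp (f i) := by
  classical
  induction s using Finset.induction with
  | empty => simp
  | insert _ _ h ih => rw [Finset.sum_insert h, Finset.prod_insert h, Circle.exp_add, ih]

lemma circle_exp_pow (x : ℝ) (M : ℕ) : Circle.exp x ^ M = Circle.exp (M * x) := by
  induction M with
  | zero => simp
  | succ M ih =>
      rw [pow_succ, ih, ← Circle.exp_add]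
      push_cast
      ring_nf

lemma circle_coe_pow (z : Circle) (n : ℕ) : ((z ^ n : Circle) : ℂ) = (z : ℂ) ^ n := by
  induction n with
  | zero => simp
  | succ n ih => rw [pow_succ, pow_succ, Circle.coe_mul, ih]

lemma fPow_iterate {r : ℕ} (m : Fin r → ℕ) (n : ℕ) (z : Torus r) (i : Fin r) :
    (fPow m)^[n] z i = z i ^ (m i ^ n) := by
  induction n generalizing z with
  | zero => simp
  | succ n ih =>
      rw [Function.iterate_succ_apply, ih]
      show (z i ^ m i) ^ m i ^ n = _
      rw [← pow_mul, ← pow_succ']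

lemma mem_slitPlane_of_ne_neg_one' {z : Circle} (h : (z : ℂ) ≠ -1) :
    (z : ℂ) ∈ Complex.slitPlane := by
  rw [Complex.mem_slitPlane_iff]
  by_contra hc
  push_neg at hc
  obtain ⟨h1, h2⟩ := hc
  apply h
  have h3 := Circle.normSq_coe z
  rw [Complex.normSq_apply, h2] at h3
  have hre : (z : ℂ).re = -1 := by nlinarith
  apply Complex.ext <;> simp [hre, h2]

open unitInterval in
lemma exists_log (G : C(I × I, Circle)) :
    ∃ h : I × I → ℝ, Continuous h ∧ h (0, 0) = 0 ∧
      ∀ p, G p = G (0, 0) * Circle.exp (h p) := by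
  have hUC : UniformContinuous G := CompactSpace.uniformContinuous_of_continuous G.continuous
  obtain ⟨δ, hδ0, hδ⟩ := Metric.uniformContinuous_iff.mp hUC 2 two_pos
  obtain ⟨N', hN'⟩ := exists_nat_one_div_lt hδ0
  set N : ℕ := N' + 1 with hNdef
  have hNpos : (0:ℝ) < (N:ℝ) := by positivity
  have hN : (1:ℝ)/(N:ℝ) < δ := by
    have : ((N':ℝ) + 1) = (N:ℝ) := by push_cast [hNdef]; ring
    rwa [this] at hN'
  set μ : ℕ → ℝ := fun j => min ((j:ℝ)/(N:ℝ)) 1 with hμdef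
  have hμ0 : ∀ j, 0 ≤ μ j := fun j => le_min (by positivity) zero_le_one
  have hμ1 : ∀ j, μ j ≤ 1 := fun j => min_le_right _ _
  have hμmono : ∀ j, μ j ≤ μ (j+1) := by
    intro j
    apply min_le_min _ le_rfl
    rw [div_le_div_iff_of_pos_right hNpos]
    push_cast; linarith
  have hμstep : ∀ j, μ (j+1) - μ j ≤ 1/(N:ℝ) := by
    intro j
    rcases le_total ((j:ℝ)/(N:ℝ)) 1 with h | h
    · have e1 : μ j = (j:ℝ)/N := min_eq_left h
      have e2 : μ (j+1) ≤ (j:ℝ)/N + 1/N := by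
        refine le_trans (min_le_left _ _) ?_
        rw [← add_div]; push_cast; linarith
      linarith
    · have e1 : μ j = 1 := min_eq_right h
      have e2 : μ (j+1) ≤ 1 := min_le_right _ _
      have h3 : (0:ℝ) ≤ 1/(N:ℝ) := by positivity
      linarith
  -- scaling maps
  have hmem : ∀ (j : ℕ) (v : I), μ j * (v:ℝ) ∈ Set.Icc (0:ℝ) 1 := by
    intro j v
    constructor
    · exact mul_nonneg (hμ0 j) v.2.1
    · nlinarith [v.2.1, v.2.2, hμ0 j, hμ1 j]
  set c : ℕ → I × I → I × I := fun j p =>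
    (⟨μ j * (p.1:ℝ), hmem j p.1⟩, ⟨μ j * (p.2:ℝ), hmem j p.2⟩) with hcdef
  have hc_cont : ∀ j, Continuous (c j) := by
    intro j
    apply Continuous.prodMk
    · exact ((continuous_const.mul (continuous_subtype_val.comp continuous_fst)).subtype_mk _)
    · exact ((continuous_const.mul (continuous_subtype_val.comp continuous_snd)).subtype_mk _)
  have hc0 : ∀ p, c 0 p = (0, 0) := by
    intro p
    have : μ 0 = 0 := by
      simp [hμdef]
    apply Prod.ext <;> · apply Subtype.ext; simp [hcdef, this]
  have hcN : ∀ p, c N p = p := by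
    intro p
    have : μ N = 1 := by
      have : (N:ℝ)/(N:ℝ) = 1 := div_self hNpos.ne'
      simp [hμdef, this]
    apply Prod.ext <;> · apply Subtype.ext; simp [hcdef, this]
  have hdist : ∀ (j : ℕ) (p : I × I), dist (c (j+1) p) (c j p) < δ := by
    intro j p
    have key : ∀ v : I, dist (μ (j+1) * (v:ℝ)) (μ j * (v:ℝ)) ≤ 1/(N:ℝ) := by
      intro v
      rw [Real.dist_eq, abs_of_nonneg (by nlinarith [hμmono j, v.2.1])]
      nlinarith [hμstep j, hμmono j, v.2.1, v.2.2]
    have h1 : dist (c (j+1) p) (c j p) ≤ 1/(N:ℝ) := by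
      rw [Prod.dist_eq]
      apply max_le
      · rw [Subtype.dist_eq]; exact key p.1
      · rw [Subtype.dist_eq]; exact key p.2
    exact lt_of_le_of_lt h1 hN
  set q : ℕ → I × I → Circle := fun j p => G (c (j+1) p) / G (c j p) with hqdef
  have hqne : ∀ j p, ((q j p : ℂ)) ≠ -1 := by
    intro j p hq
    have hb : ((G (c j p) : ℂ)) ≠ 0 := Circle.coe_ne_zero _
    have h2 : ((G (c (j+1) p) : ℂ)) = -1 * (G (c j p) : ℂ) := by
      rw [← div_eq_iff hb]
      exact hq
    have h3 := hδ (hdist j p)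
    change dist ((G (c (j+1) p) : ℂ)) (G (c j p) : ℂ) < 2 at h3
    rw [Complex.dist_eq, h2,
      show (-1 : ℂ) * (G (c j p) : ℂ) - (G (c j p) : ℂ) = (-2) * (G (c j p) : ℂ) by ring] at h3
    rw [norm_mul, Circle.norm_coe, mul_one] at h3
    norm_num at h3
  set h : I × I → ℝ := fun p => ∑ j ∈ Finset.range N, Complex.arg (q j p) with hhdef
  have hqcont : ∀ j, Continuous fun p => ((q j p : ℂ)) := by
    intro j
    exact continuous_subtype_val.comp
      ((G.continuous.comp (hc_cont (j+1))).div' (G.continuous.comp (hc_cont j)))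
  refine ⟨h, ?_, ?_, ?_⟩
  · apply continuous_finset_sum
    intro j _
    rw [continuous_iff_continuousAt]
    intro p
    have h1 : ContinuousAt (fun p => ((q j p : ℂ))) p := (hqcont j).continuousAt
    exact ContinuousAt.comp (x := p)
      (Complex.continuousAt_arg (mem_slitPlane_of_ne_neg_one' (hqne j p))) h1
  · rw [hhdef]
    apply Finset.sum_eq_zero
    intro j _
    have e1 : c (j+1) ((0:I),(0:I)) = ((0:I),(0:I)) := by
      apply Prod.ext <;> (apply Subtype.ext; simp [hcdef])
    have e2 : c j ((0:I),(0:I)) = ((0:I),(0:I)) := by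
      apply Prod.ext <;> (apply Subtype.ext; simp [hcdef])
    have hq1 : q j (0,0) = 1 := by
      show G (c (j+1) (0,0)) / G (c j (0,0)) = 1
      rw [e1, e2, div_self']
    rw [hq1]
    simpa using Complex.arg_one
  · intro p
    have hexp : Circle.exp (h p) = ∏ j ∈ Finset.range N, q j p := by
      rw [hhdef, circle_exp_sum']
      apply Finset.prod_congr rfl
      intro j _
      exact Circle.exp_arg _
    have htel : ∏ j ∈ Finset.range N, q j p = G p / G (0, 0) := by
      rw [hqdef]
      rw [Finset.prod_range_div (fun j => G (c j p)) N, hcN, hc0]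
    rw [hexp, htel]
    generalize G p = a
    generalize G (0,0) = b
    rw [mul_div_assoc', mul_comm, mul_div_assoc, div_self', mul_one]

open unitInterval in
lemma torus_lift_unique {A : Type*} [TopologicalSpace A] [PreconnectedSpace A]
    {r : ℕ} (M : Fin r → ℕ) (hM : ∀ i, M i ≠ 0)
    {a b : A → Torus r} (ha : Continuous a) (hb : Continuous b)
    (hab : ∀ x i, a x i ^ M i = b x i ^ M i) {x₀ : A} (h0 : a x₀ = b x₀) (x : A) :
    a x = b x := by
  funext i
  set T : Set ℂ := (↑(Polynomial.nthRootsFinset (M i) (1 : ℂ)) : Set ℂ) with hT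
  haveI : Finite T := by
    rw [hT]; infer_instance
  set v : A → ℂ := fun y => ((a y i * (b y i)⁻¹ : Circle) : ℂ) with hv
  have hmem : ∀ y, v y ∈ T := by
    intro y
    rw [hT, Finset.mem_coe, Polynomial.mem_nthRootsFinset (Nat.pos_of_ne_zero (hM i))]
    have : (a y i * (b y i)⁻¹) ^ M i = 1 := by
      rw [mul_pow, inv_pow, hab y i, mul_inv_cancel]
    show ((a y i * (b y i)⁻¹ : Circle) : ℂ) ^ M i = 1
    rw [← circle_coe_pow, this]
    rfl
  have hvc : Continuous v := by
    apply continuous_subtype_val.comp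
    exact (((continuous_apply i).comp ha).mul (((continuous_apply i).comp hb).inv))
  have hconst : v x = v x₀ :=
    IsPreconnected.constant_of_mapsTo (PreconnectedSpace.isPreconnected_univ)
      (Set.toFinite T).isDiscrete hvc.continuousOn (fun y _ => hmem y) trivial trivial
  have hx₀ : v x₀ = 1 := by
    show ((a x₀ i * (b x₀ i)⁻¹ : Circle) : ℂ) = 1
    have : a x₀ i = b x₀ i := congrFun h0 i
    rw [this, mul_inv_cancel]
    rfl
  have : a x i * (b x i)⁻¹ = 1 := by
    have := hconst.trans hx₀
    exact Circle.coe_injective (by rwa [Circle.coe_one])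
  exact mul_inv_eq_one.mp this


/-- **Lemma 2(f).** Lifts (through `fⁿ`, starting at `1⁻`) of homotopic loops agree at
every natural number, and their restrictions to `[0,k]` are homotopic rel endpoints. -/
theorem lifts_of_homotopic_loops {r : ℕ} (hr : 0 < r) (m : Fin r → ℕ)
    (hm : ∀ i, 2 ≤ m i) (hcop : ∀ i j, i ≠ j → Nat.Coprime (m i) (m j))
    (γ ζ : Path (onePt r) (onePt r)) (hγζ : γ.Homotopic ζ) (n : ℕ)
    (δγ δζ : ℝ≥0 → Torus r) (hcγ : Continuous δγ) (hcζ : Continuous δζ)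
    (hγ0 : δγ 0 = onePt r) (hζ0 : δζ 0 = onePt r)
    (hγl : ∀ t, (fPow m)^[n] (δγ t) = loopExt γ t)
    (hζl : ∀ t, (fPow m)^[n] (δζ t) = loopExt ζ t) :
    ∀ k : ℕ, δγ k = δζ k ∧
      Nonempty (ContinuousMap.HomotopyRel
        ⟨fun t : unitInterval => δγ ⟨(k : ℝ) * t, mul_nonneg (Nat.cast_nonneg k) t.2.1⟩,
          hcγ.comp ((continuous_const.mul continuous_subtype_val).subtype_mk _)⟩
        ⟨fun t : unitInterval => δζ ⟨(k : ℝ) * t, mul_nonneg (Nat.cast_nonneg k) t.2.1⟩,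
          hcζ.comp ((continuous_const.mul continuous_subtype_val).subtype_mk _)⟩
        {0, 1}) := by
  intro k
  obtain ⟨Hty⟩ := hγζ
  set M : Fin r → ℕ := fun i => m i ^ n with hMdef
  have hM0 : ∀ i, M i ≠ 0 := fun i => pow_ne_zero _ (by have := hm i; omega)
  -- the homotopy downstairs, with swapped arguments and extended periodically
  set K : C(unitInterval × unitInterval, Torus r) :=
    Hty.toContinuousMap.comp ⟨Prod.swap, continuous_swap⟩ with hKdef
  set fR : C(ℝ, C(unitInterval, Torus r)) :=
    K.curry.comp ⟨Set.projIcc 0 1 zero_le_one, continuous_projIcc⟩ with hfRdef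
  have e0 : Set.projIcc (0:ℝ) 1 zero_le_one (0:ℝ) = (0:unitInterval) :=
    Subtype.ext (by simp [Set.projIcc])
  have e1 : Set.projIcc (0:ℝ) 1 zero_le_one (1:ℝ) = (1:unitInterval) :=
    Subtype.ext (by simp [Set.projIcc])
  have hfR : (fR : ℝ → C(unitInterval, Torus r)) 0 = fR 1 := by
    refine ContinuousMap.ext fun s => ?_
    show Hty (s, Set.projIcc (0:ℝ) 1 zero_le_one 0) = Hty (s, Set.projIcc (0:ℝ) 1 zero_le_one 1)
    rw [e0, e1]
    rw [Hty.eq_fst s (Set.mem_insert _ _),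
      Hty.eq_fst s (Set.mem_insert_of_mem _ rfl)]
    show γ 0 = γ 1
    rw [γ.source, γ.target]
  set g : AddCircle (1:ℝ) → C(unitInterval, Torus r) :=
    AddCircle.liftIco 1 0 (fR : ℝ → C(unitInterval, Torus r)) with hgdef
  have hgc : Continuous g :=
    AddCircle.liftIco_zero_continuous hfR fR.continuous.continuousOn
  set Wfun : unitInterval × unitInterval → Torus r :=
    fun p => g ((((k : ℝ) * (p.2 : ℝ) : ℝ) : AddCircle (1:ℝ))) p.1 with hWdef
  have hWc : Continuous Wfun := by
    have h1 : Continuous fun p : unitInterval × unitInterval =>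
        g ((((k : ℝ) * (p.2 : ℝ) : ℝ) : AddCircle (1:ℝ))) :=
      hgc.comp ((AddCircle.continuous_mk' (1:ℝ)).comp
        (continuous_const.mul (continuous_subtype_val.comp continuous_snd)))
    exact h1.eval continuous_fst
  have hfract : ∀ x : ℝ, ((x : AddCircle (1:ℝ))) = ((Int.fract x : ℝ) : AddCircle (1:ℝ)) := by
    intro x
    rw [QuotientAddGroup.eq]
    refine AddSubgroup.mem_zmultiples_iff.mpr ⟨-⌊x⌋, ?_⟩
    rw [zsmul_eq_mul, Int.fract]
    push_cast
    ring
  have hWval : ∀ p : unitInterval × unitInterval,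
      Wfun p = Hty (p.1, ⟨Int.fract ((k:ℝ) * (p.2:ℝ)),
        Int.fract_nonneg _, (Int.fract_lt_one _).le⟩) := by
    intro p
    show g _ p.1 = _
    rw [hfract, hgdef,
      AddCircle.liftIco_zero_coe_apply ⟨Int.fract_nonneg _, Int.fract_lt_one _⟩]
    show Hty (p.1, Set.projIcc (0:ℝ) 1 zero_le_one (Int.fract ((k:ℝ) * (p.2:ℝ)))) = _
    rw [Set.projIcc_of_mem zero_le_one ⟨Int.fract_nonneg _, (Int.fract_lt_one _).le⟩]
  have hW0 : ∀ s : unitInterval, Wfun (s, 0) = onePt r := by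
    intro s
    rw [hWval (s, 0)]
    have hz : (⟨Int.fract ((k:ℝ) * (((0:unitInterval)):ℝ)),
        Int.fract_nonneg _, (Int.fract_lt_one _).le⟩ : unitInterval) = (0:unitInterval) :=
      Subtype.ext (by norm_num)
    rw [hz, Hty.eq_fst s (Set.mem_insert _ _)]
    exact γ.source
  have hW1 : ∀ s : unitInterval, Wfun (s, 1) = onePt r := by
    intro s
    rw [hWval (s, 1)]
    have hz : (⟨Int.fract ((k:ℝ) * (((1:unitInterval)):ℝ)),
        Int.fract_nonneg _, (Int.fract_lt_one _).le⟩ : unitInterval) = (0:unitInterval) :=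
      Subtype.ext (by norm_num [Int.fract_natCast])
    rw [hz, Hty.eq_fst s (Set.mem_insert _ _)]
    exact γ.source
  have hWγ : ∀ t : unitInterval, Wfun (0, t) =
      loopExt γ ⟨(k:ℝ) * t, mul_nonneg (Nat.cast_nonneg k) t.2.1⟩ := by
    intro t
    rw [hWval (0, t), Hty.apply_zero]
    rfl
  have hWζ : ∀ t : unitInterval, Wfun (1, t) =
      loopExt ζ ⟨(k:ℝ) * t, mul_nonneg (Nat.cast_nonneg k) t.2.1⟩ := by
    intro t
    rw [hWval (1, t), Hty.apply_one]
    rfl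
  -- choose continuous logarithms of the components of `Wfun`
  have hres : ∀ i : Fin r, ∃ h : unitInterval × unitInterval → ℝ, Continuous h ∧ h (0,0) = 0 ∧
      ∀ p, Wfun p i = Circle.exp (h p) := by
    intro i
    obtain ⟨h, hc, h0, hval⟩ := exists_log ⟨fun p => Wfun p i, (continuous_apply i).comp hWc⟩
    refine ⟨h, hc, h0, fun p => ?_⟩
    have h00 : Wfun ((0:unitInterval), (0:unitInterval)) i = 1 := by rw [hW0]; rfl
    have hv := hval p
    simp only [ContinuousMap.coe_mk] at hv
    rw [h00, one_mul] at hv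
    exact hv
  choose hfun hfc hf0 hfval using hres
  -- the explicit lift of the homotopy
  set L : unitInterval × unitInterval → Torus r :=
    fun p i => Circle.exp (hfun i p / (M i : ℝ)) with hLdef
  have hLc : Continuous L :=
    continuous_pi fun i => Circle.exp.continuous.comp ((hfc i).div_const _)
  have hLpow : ∀ p i, L p i ^ M i = Wfun p i := by
    intro p i
    show Circle.exp (hfun i p / (M i : ℝ)) ^ M i = _
    have hMne : ((M i : ℝ)) ≠ 0 := by exact_mod_cast hM0 i
    rw [circle_exp_pow, mul_div_cancel₀ _ hMne, hfval i p]
  have hL00 : L (0, 0) = onePt r := by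
    funext i
    show Circle.exp (hfun i (0,0) / (M i : ℝ)) = 1
    rw [hf0 i, zero_div, Circle.exp_zero]
  have hiter : ∀ (z : Torus r) (i : Fin r), (fPow m)^[n] z i = z i ^ M i :=
    fun z i => fPow_iterate m n z i
  -- bottom edge is constant at the base point
  have hBottom : ∀ s : unitInterval, L (s, 0) = onePt r := by
    intro s
    refine torus_lift_unique M hM0 (a := fun s : unitInterval => L (s, 0))
      (b := fun _ => onePt r)
      (hLc.comp (continuous_id.prodMk continuous_const)) continuous_const
      (fun s i => ?_) (x₀ := (0:unitInterval)) hL00 s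
    rw [hLpow (s, 0) i, hW0 s]
    show (1:Circle) = (1:Circle) ^ M i
    rw [one_pow]
  -- top edge is constant
  have hTop : ∀ s : unitInterval, L (s, 1) = L (0, 1) := by
    intro s
    refine torus_lift_unique M hM0 (a := fun s : unitInterval => L (s, 1))
      (b := fun _ => L (0, 1))
      (hLc.comp (continuous_id.prodMk continuous_const))
      (hLc.comp (continuous_const.prodMk continuous_const))
      (fun s i => ?_) (x₀ := (0:unitInterval)) rfl s
    rw [hLpow (s, 1) i, hLpow (0, 1) i, hW1 s, hW1 0]
  have hzerok : (⟨(k:ℝ) * (((0:unitInterval)):ℝ),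
      mul_nonneg (Nat.cast_nonneg k) (0:unitInterval).2.1⟩ : ℝ≥0) = 0 :=
    Subtype.ext (by norm_num)
  -- the `s = 0` slice of the lift is the given lift of `γ`
  have hEdgeγ : ∀ t : unitInterval, L (0, t) =
      δγ ⟨(k:ℝ) * t, mul_nonneg (Nat.cast_nonneg k) t.2.1⟩ := by
    intro t
    refine torus_lift_unique M hM0 (a := fun t : unitInterval => L (0, t))
      (b := fun t : unitInterval => δγ ⟨(k:ℝ) * t, mul_nonneg (Nat.cast_nonneg k) t.2.1⟩)
      (hLc.comp (continuous_const.prodMk continuous_id))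
      (hcγ.comp ((continuous_const.mul continuous_subtype_val).subtype_mk _))
      (fun t i => ?_) (x₀ := (0:unitInterval)) ?_ t
    · rw [hLpow (0, t) i, hWγ t]
      exact (congrFun (hγl _) i).symm.trans (hiter _ i)
    · show L (0, 0) = δγ ⟨(k:ℝ) * (((0:unitInterval)):ℝ),
        mul_nonneg (Nat.cast_nonneg k) (0:unitInterval).2.1⟩
      rw [hL00, hzerok]
      exact hγ0.symm
  have hEdgeζ : ∀ t : unitInterval, L (1, t) =
      δζ ⟨(k:ℝ) * t, mul_nonneg (Nat.cast_nonneg k) t.2.1⟩ := by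
    intro t
    refine torus_lift_unique M hM0 (a := fun t : unitInterval => L (1, t))
      (b := fun t : unitInterval => δζ ⟨(k:ℝ) * t, mul_nonneg (Nat.cast_nonneg k) t.2.1⟩)
      (hLc.comp (continuous_const.prodMk continuous_id))
      (hcζ.comp ((continuous_const.mul continuous_subtype_val).subtype_mk _))
      (fun t i => ?_) (x₀ := (0:unitInterval)) ?_ t
    · rw [hLpow (1, t) i, hWζ t]
      exact (congrFun (hζl _) i).symm.trans (hiter _ i)
    · show L (1, 0) = δζ ⟨(k:ℝ) * (((0:unitInterval)):ℝ),
        mul_nonneg (Nat.cast_nonneg k) (0:unitInterval).2.1⟩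
      rw [hBottom 1, hzerok]
      exact hζ0.symm
  have honek : (⟨(k:ℝ) * (((1:unitInterval)):ℝ),
      mul_nonneg (Nat.cast_nonneg k) (1:unitInterval).2.1⟩ : ℝ≥0) = (k : ℝ≥0) :=
    Subtype.ext (by norm_num)
  constructor
  · calc δγ (k : ℝ≥0)
        = L (0, 1) := by rw [← honek]; exact (hEdgeγ 1).symm
      _ = L (1, 1) := (hTop 1).symm
      _ = δζ (k : ℝ≥0) := by rw [← honek]; exact hEdgeζ 1
  · refine ⟨{ toContinuousMap := ⟨fun p => L p, hLc⟩
              map_zero_left := fun t => hEdgeγ t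
              map_one_left := fun t => hEdgeζ t
              prop' := ?_ }⟩
    intro s x hx
    simp only [Set.mem_insert_iff, Set.mem_singleton_iff] at hx
    rcases hx with rfl | rfl
    · show L (s, 0) = δγ ⟨(k:ℝ) * ((0:unitInterval):ℝ),
        mul_nonneg (Nat.cast_nonneg k) (0:unitInterval).2.1⟩
      rw [hBottom s, hzerok]
      exact hγ0.symm
    · show L (s, 1) = δγ ⟨(k:ℝ) * ((1:unitInterval):ℝ),
        mul_nonneg (Nat.cast_nonneg k) (1:unitInterval).2.1⟩
      rw [hTop s]
      exact hEdgeγ 1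
end

section
/- Let U ⊆ T be a set containing 1⁻, let 1 ≤ k < r, and let γ, ζ : [0,1] → U be loops at 1⁻ such that: for each i ∈ {1,…,k}, ρ_i ∘ γ is homotopic to λ_{s_i} with s_i ∈ ℤ∖{0}; ρ_{k+1} ∘ γ is homotopic to λ_{s_{k+1}} with s_{k+1} ∈ ℤ; for each i ∈ {1,…,k}, ρ_i ∘ ζ is homotopic to λ_{t_i} with t_i ∈ ℤ; and ρ_{k+1} ∘ ζ is homotopic to λ_{s₀} with s₀ ∈ ℤ∖{0}. Let l ∈ ℕ with l > max{|s₁|,…,|s_k|, |s_{k+1}|}. Then the concatenated loop ζ ∗ ⋯ ∗ ζ ∗ γ (with l copies of ζ), which is a loop at 1⁻ with image contained in U, satisfies: for each i ∈ {1,…,k+1}, ρ_i composed with this loop is homotopic to λ_{u_i} for some u_i ∈ ℤ∖{0}. -/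
open scoped Real NNReal

/-- Concatenation `ζ ∗ ⋯ ∗ ζ ∗ γ` with `l` copies of `ζ`. -/
noncomputable def iterConcat {X : Type*} [TopologicalSpace X] {x : X}
    (ζ γ : Path x x) : ℕ → Path x x
  | 0 => γ
  | (l + 1) => ζ.trans (iterConcat ζ γ l)


lemma eMap_continuous : Continuous eMap := Circle.exp.continuous.comp (by fun_prop)

lemma eMap_add (x y : ℝ) : eMap (x + y) = eMap x * eMap y := by
  simp [eMap, mul_add, Circle.exp_add]

lemma eMap_int (n : ℤ) : eMap n = 1 := by
  rw [eMap, show 2 * Real.pi * (n:ℝ) = (n:ℝ) * (2 * Real.pi) by ring]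
  exact Circle.exp_int_mul_two_pi n

/-- straight-line path in ℝ -/
noncomputable def seg (a b : ℝ) : Path a b where
  toFun t := a + (b - a) * t
  continuous_toFun := by fun_prop
  source' := by simp
  target' := by simp

lemma transfer_hom {X : Type*} [TopologicalSpace X] {a b x : X} {p' q' : Path a b}
    {p q : Path x x} (hp : (p' : unitInterval → X) = p) (hq : (q' : unitInterval → X) = q)
    (h : p'.Homotopic q') : p.Homotopic q := by
  have ha : a = x := by rw [← p'.source, hp]; exact p.source
  have hb : b = x := by rw [← p'.target, hp]; exact p.target
  subst ha; subst hb
  have h1 : p' = p := Path.ext hp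
  have h2 : q' = q := Path.ext hq
  rwa [h1, h2] at h

lemma lam_trans_hom (a b : ℤ) : ((lam a).trans (lam b)).Homotopic (lam (a + b)) := by
  have hcont : Continuous eMap := eMap_continuous
  set pa : Path (0:ℝ) (a:ℝ) := seg 0 a with hpa
  set pb : Path (a:ℝ) ((a:ℝ) + b) := seg a (a + b) with hpb
  set pab : Path (0:ℝ) ((a:ℝ) + b) := seg 0 (a + b) with hpab
  have hR : (pa.trans pb).Homotopic pab := SimplyConnectedSpace.paths_homotopic _ _
  have hC := hR.map (f := ⟨eMap, hcont⟩)
  rw [Path.map_trans] at hC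
  have ca : ((pa.map hcont : Path (eMap 0) (eMap (a:ℝ))) : unitInterval → Circle)
      = (lam a : unitInterval → Circle) := by
    funext u
    show eMap (0 + ((a:ℝ) - 0) * u) = eMap ((a:ℝ) * u)
    ring_nf
  have cb : ((pb.map hcont) : unitInterval → Circle) = (lam b : unitInterval → Circle) := by
    funext u
    show eMap ((a:ℝ) + ((a:ℝ) + b - a) * u) = eMap ((b:ℝ) * u)
    rw [show ((a:ℝ) + b - a) = (b:ℝ) by ring, eMap_add, eMap_int, one_mul]
  have cab : ((pab.map hcont) : unitInterval → Circle)
      = (lam (a+b) : unitInterval → Circle) := by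
    funext u
    show eMap (0 + ((a:ℝ) + b - 0) * u) = eMap (((a+b : ℤ):ℝ) * u)
    push_cast
    ring_nf
  refine transfer_hom ?_ cab hC
  funext u
  rw [Path.trans_apply, Path.trans_apply]
  split_ifs
  · exact congrFun ca _
  · exact congrFun cb _

lemma iter_hom_aux {r : ℕ} (γ ζ : Path (onePt r) (onePt r)) (i : Fin r) {c d : ℤ}
    (hz : (ζ.map (continuous_apply i)).Homotopic (lam c))
    (hg : (γ.map (continuous_apply i)).Homotopic (lam d)) :
    ∀ l : ℕ, ((iterConcat ζ γ l).map (continuous_apply i)).Homotopic (lam ((l:ℤ) * c + d))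
  | 0 => by simpa [iterConcat] using hg
  | (l+1) => by
    have IH := iter_hom_aux γ ζ i hz hg l
    have h2 : ((iterConcat ζ γ (l+1)).map (continuous_apply i)).Homotopic
        (lam (c + ((l:ℤ)*c + d))) := by
      rw [show iterConcat ζ γ (l+1) = ζ.trans (iterConcat ζ γ l) from rfl, Path.map_trans]
      exact (hz.hcomp IH).trans (lam_trans_hom _ _)
    have he : c + ((l:ℤ)*c + d) = ((l+1 : ℕ):ℤ)*c + d := by push_cast; ring
    rwa [he] at h2

lemma nz_aux {l : ℕ} {c d : ℤ} (hd : |d| < (l:ℤ)) (h : c = 0 → d ≠ 0) :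
    (l:ℤ)*c + d ≠ 0 := by
  rcases eq_or_ne c 0 with rfl | hc
  · simpa using h rfl
  · intro h0
    have h1 : d = -((l:ℤ)*c) := by linarith
    have h2 : (l:ℤ) ≤ |d| := by
      rw [h1, abs_neg, abs_mul, abs_of_nonneg (Int.ofNat_nonneg l)]
      nlinarith [Int.one_le_abs hc, abs_nonneg d, Int.ofNat_nonneg l]
    linarith

/-- The inductive step of Lemma 5: concatenating `l` copies of `ζ` with `γ` yields a
loop in `U` whose first `k+1` coordinate projections are all non-trivial. -/
theorem inductive_step_loops {r : ℕ} (U : Set (Torus r)) (hU : onePt r ∈ U)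
    (k : ℕ) (hk1 : 1 ≤ k) (hkr : k < r)
    (γ ζ : Path (onePt r) (onePt r)) (hγU : ∀ x, γ x ∈ U) (hζU : ∀ x, ζ x ∈ U)
    (s t : Fin r → ℤ) (s₀ : ℤ)
    (hs : ∀ i : Fin r, i.1 < k →
      s i ≠ 0 ∧ (γ.map (continuous_apply i)).Homotopic (lam (s i)))
    (hsk : (γ.map (continuous_apply (⟨k, hkr⟩ : Fin r))).Homotopic
      (lam (s ⟨k, hkr⟩)))
    (ht : ∀ i : Fin r, i.1 < k → (ζ.map (continuous_apply i)).Homotopic (lam (t i)))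
    (hs₀ : s₀ ≠ 0)
    (htk : (ζ.map (continuous_apply (⟨k, hkr⟩ : Fin r))).Homotopic (lam s₀))
    (l : ℕ) (hl : ∀ i : Fin r, i.1 ≤ k → |s i| < (l : ℤ)) :
    (∀ x, iterConcat ζ γ l x ∈ U) ∧
      ∀ i : Fin r, i.1 ≤ k → ∃ u : ℤ, u ≠ 0 ∧
        ((iterConcat ζ γ l).map (continuous_apply i)).Homotopic (lam u) := by
  have hmem : ∀ n : ℕ, ∀ x, iterConcat ζ γ n x ∈ U := by
    intro n
    induction n with
    | zero => exact hγU
    | succ n IH =>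
      intro x
      rw [show iterConcat ζ γ (n+1) = ζ.trans (iterConcat ζ γ n) from rfl, Path.trans_apply]
      split_ifs
      · exact hζU _
      · exact IH _
  refine ⟨hmem l, ?_⟩
  intro i hik
  rcases lt_or_eq_of_le hik with hik' | hik'
  · exact ⟨(l:ℤ) * t i + s i, nz_aux (hl i hik'.le) (fun _ => (hs i hik').1),
      iter_hom_aux γ ζ i (ht i hik') (hs i hik').2 l⟩
  · have hieq : i = ⟨k, hkr⟩ := Fin.ext hik'
    subst hieq
    exact ⟨(l:ℤ) * s₀ + s ⟨k, hkr⟩, nz_aux (hl _ le_rfl) (fun h0 => absurd h0 hs₀),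
      iter_hom_aux γ ζ _ htk hsk l⟩
end
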